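/- arXiv:2312.11830 — 2 statements merged into one kernel-verified Lean document; each statement's English description precedes it below -/
import Mathlib

section
/- Let a, b > 0 and let z : ℝ → ℂ² be a differentiable curve satisfying z'(t) = R_{a,b}(z(t)) = (2πi·z₁(t)/a, 2πi·z₂(t)/b) for all t. Suppose z is not constant and z(T) = z(0) for some T > 0. Then T is a positive integer multiple of a or a positive integer multiple of b; in particular T ≥ min(a, b). (Hence the minimal action of Reeb orbits on ∂E(a,b) is at least min(a,b).) -/
noncomputable section

open Complex

/-- The Reeb vector field of the standard Liouville form on the boundary of the
ellipsoid `E(a,b)`: `R_{a,b}(z) = (2πi·z₁/a, 2πi·z₂/b)`. -/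
def reebEllipsoid (a b : ℝ) (z : ℂ × ℂ) : ℂ × ℂ :=
  (2 * (Real.pi : ℂ) * Complex.I * z.1 / (a : ℂ),
   2 * (Real.pi : ℂ) * Complex.I * z.2 / (b : ℂ))

lemma ode_exp_sol (c : ℂ) (w : ℝ → ℂ) (hw : ∀ t : ℝ, HasDerivAt w (c * w t) t) :
    ∀ t : ℝ, w t = Complex.exp (c * t) * w 0 := by
  have key : ∀ t : ℝ, Complex.exp (-(c * t)) * w t = Complex.exp (-(c * 0)) * w 0 := by
    have hg : ∀ t : ℝ, HasDerivAt (fun t : ℝ => Complex.exp (-(c * t)) * w t) 0 t := by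
      intro t
      have h1 : HasDerivAt (fun u : ℂ => Complex.exp (-(c * u)))
          (Complex.exp (-(c * t)) * (-c)) (t : ℝ) := by
        have := (Complex.hasDerivAt_exp (-(c * (t : ℂ)))).comp (t : ℂ)
          (((hasDerivAt_id (t : ℂ)).const_mul c).neg)
        simpa [mul_comm, Function.comp_def] using this
      have h2 : HasDerivAt (fun t : ℝ => Complex.exp (-(c * t)))
          (Complex.exp (-(c * t)) * (-c)) t := h1.comp_ofReal
      have h3 := h2.mul (hw t)
      convert h3 using 1
      · rfl
      · rfl
      · ring
    intro t
    exact is_const_of_deriv_eq_zero (f := fun t : ℝ => Complex.exp (-(c * t)) * w t)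
      (fun t => (hg t).differentiableAt) (fun t => (hg t).deriv) t 0
  intro t
  calc w t = Complex.exp (c * t) * (Complex.exp (-(c * t)) * w t) := by
        rw [← mul_assoc, ← Complex.exp_add]; simp
    _ = Complex.exp (c * t) * w 0 := by rw [key t]; simp [← Complex.exp_add]

lemma period_mult (r T : ℝ) (hr : 0 < r) (hT : 0 < T) (w0 : ℂ) (hw0 : w0 ≠ 0)
    (h : Complex.exp (2 * (Real.pi : ℂ) * Complex.I / (r : ℂ) * (T : ℂ)) * w0 = w0) :
    ∃ k : ℕ, 1 ≤ k ∧ T = (k : ℝ) * r := by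
  have hexp : Complex.exp (2 * (Real.pi : ℂ) * Complex.I / (r : ℂ) * (T : ℂ)) = 1 := by
    exact mul_right_cancel₀ hw0 (h.trans (one_mul w0).symm)
  rw [Complex.exp_eq_one_iff] at hexp
  obtain ⟨n, hn⟩ := hexp
  have hrne : (r : ℂ) ≠ 0 := by exact_mod_cast hr.ne'
  have hpi : (Real.pi : ℂ) ≠ 0 := by exact_mod_cast Real.pi_ne_zero
  have hTr : (T : ℂ) = (n : ℂ) * r := by
    field_simp at hn
    have h2 : (2 : ℂ) * Real.pi * Complex.I ≠ 0 := by
      simp [hpi, Complex.I_ne_zero]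
    have hn' : 2 * (Real.pi : ℂ) * Complex.I * T = 2 * (Real.pi : ℂ) * Complex.I * ((n : ℂ) * r) := by
      linear_combination (2 * (Real.pi : ℂ) * Complex.I) * hn
    exact mul_left_cancel₀ h2 hn'
  have hTr' : T = (n : ℝ) * r := by exact_mod_cast hTr
  have hnpos : 0 < n := by
    by_contra hle
    push_neg at hle
    have : (n : ℝ) * r ≤ 0 :=
      mul_nonpos_of_nonpos_of_nonneg (by exact_mod_cast hle) hr.le
    linarith [hTr' ▸ hT]
  exact ⟨n.toNat, by omega, by rw [hTr']; congr 1; exact_mod_cast (Int.toNat_of_nonneg hnpos.le).symm⟩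

/-- Any period of a nonconstant solution of the Reeb flow of the ellipsoid `E(a,b)` is a
positive integer multiple of `a` or of `b`; in particular the minimal action of Reeb
orbits on `∂E(a,b)` is at least `min(a, b)`. -/
theorem ellipsoid_period_multiple (a b T : ℝ) (ha : 0 < a) (hb : 0 < b)
    (z : ℝ → ℂ × ℂ) (hdiff : Differentiable ℝ z)
    (hode : ∀ t, deriv z t = reebEllipsoid a b (z t))
    (hnonconst : ∃ t s : ℝ, z t ≠ z s)
    (hT : 0 < T) (hper : z T = z 0) :
    ((∃ k : ℕ, 1 ≤ k ∧ T = (k : ℝ) * a) ∨ (∃ k : ℕ, 1 ≤ k ∧ T = (k : ℝ) * b)) ∧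
      min a b ≤ T := by
  set c1 : ℂ := 2 * (Real.pi : ℂ) * Complex.I / (a : ℂ) with hc1
  set c2 : ℂ := 2 * (Real.pi : ℂ) * Complex.I / (b : ℂ) with hc2
  have hderiv : ∀ t, HasDerivAt z (deriv z t) t := fun t => (hdiff t).hasDerivAt
  have hw1 : ∀ t : ℝ, HasDerivAt (fun s => (z s).1) (c1 * (z t).1) t := by
    intro t
    have h := ((hdiff t).hasFDerivAt.fst).hasDerivAt
    have h' : HasDerivAt (fun x => (z x).1) (deriv z t).1 t := by simpa using h
    have e : (deriv z t).1 = c1 * (z t).1 := by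
      rw [hode t]; simp only [reebEllipsoid, hc1]; ring
    rwa [e] at h'
  have hw2 : ∀ t : ℝ, HasDerivAt (fun s => (z s).2) (c2 * (z t).2) t := by
    intro t
    have h := ((hdiff t).hasFDerivAt.snd).hasDerivAt
    have h' : HasDerivAt (fun x => (z x).2) (deriv z t).2 t := by simpa using h
    have e : (deriv z t).2 = c2 * (z t).2 := by
      rw [hode t]; simp only [reebEllipsoid, hc2]; ring
    rwa [e] at h'
  have sol1 := ode_exp_sol c1 _ hw1
  have sol2 := ode_exp_sol c2 _ hw2
  have hper1 : Complex.exp (c1 * T) * (z 0).1 = (z 0).1 := by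
    have := sol1 T
    rw [hper] at this
    exact this.symm
  have hper2 : Complex.exp (c2 * T) * (z 0).2 = (z 0).2 := by
    have := sol2 T
    rw [hper] at this
    exact this.symm
  have hz0 : (z 0).1 ≠ 0 ∨ (z 0).2 ≠ 0 := by
    by_contra hc
    push_neg at hc
    obtain ⟨t, s, hts⟩ := hnonconst
    apply hts
    have hz : ∀ u : ℝ, z u = (0, 0) := by
      intro u
      have e1 := sol1 u
      have e2 := sol2 u
      rw [hc.1] at e1
      rw [hc.2] at e2
      exact Prod.ext (by simpa using e1) (by simpa using e2)
    rw [hz t, hz s]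
  have main : (∃ k : ℕ, 1 ≤ k ∧ T = (k : ℝ) * a) ∨ (∃ k : ℕ, 1 ≤ k ∧ T = (k : ℝ) * b) := by
    rcases hz0 with h0 | h0
    · exact Or.inl (period_mult a T ha hT _ h0 hper1)
    · exact Or.inr (period_mult b T hb hT _ h0 hper2)
  refine ⟨main, ?_⟩
  rcases main with ⟨k, hk, hTk⟩ | ⟨k, hk, hTk⟩
  · calc min a b ≤ a := min_le_left a b
      _ ≤ (k : ℝ) * a := le_mul_of_one_le_left ha.le (by exact_mod_cast hk)
      _ = T := hTk.symm
  · calc min a b ≤ b := min_le_right a b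
      _ ≤ (k : ℝ) * b := le_mul_of_one_le_left hb.le (by exact_mod_cast hk)
      _ = T := hTk.symm
end
end

section
/- Let a, b > 0. The set of real numbers T > 0 for which there exists a nonconstant differentiable curve z : ℝ → ℂ² with image contained in ∂E(a,b), satisfying z'(t) = R_{a,b}(z(t)) for all t and z(T) = z(0), is exactly {k·a : k ∈ ℤ, k ≥ 1} ∪ {k·b : k ∈ ℤ, k ≥ 1}. (This computes the action spectrum of the ellipsoid E(a,b); in particular the minimum action of a Reeb orbit on ∂E(a,b) is min(a,b).) -/
noncomputable section

open Complex

/-- Uniqueness of solutions of the linear ODE `f' = c f` over `ℝ`. -/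
lemma ode_sol_aux (c : ℂ) (f : ℝ → ℂ) (hf : Differentiable ℝ f)
    (hf' : ∀ t, deriv f t = c * f t) :
    ∀ t, f t = f 0 * Complex.exp (c * t) := by
  have key : ∀ t : ℝ, HasDerivAt (fun s : ℝ => f s * Complex.exp (-(c * s))) 0 t := by
    intro t
    have h1 : HasDerivAt (fun s : ℝ => (s : ℂ)) 1 t := by
      exact Complex.ofRealCLM.hasDerivAt (x := t)
    have h2 : HasDerivAt (fun s : ℝ => -(c * (s : ℂ))) (-c) t := by
      exact (h1.const_mul c).neg.congr_deriv (by ring)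
    have h4 := (hf t).hasDerivAt.mul h2.cexp
    exact h4.congr_deriv (by rw [hf' t]; ring)
  have hconst : ∀ t : ℝ, f t * Complex.exp (-(c * t)) = f 0 * Complex.exp (-(c * 0)) :=
    fun t => is_const_of_deriv_eq_zero (fun s => (key s).differentiableAt)
      (fun s => (key s).deriv) t 0
  intro t
  have h := hconst t
  simp only [Complex.ofReal_zero, mul_zero, neg_zero, Complex.exp_zero, mul_one] at h
  have := congrArg (· * Complex.exp (c * t)) h
  simpa [mul_assoc, ← Complex.exp_add] using this

/-- Existence of a periodic Reeb orbit in the first coordinate. -/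
lemma orbit_first_aux (a b : ℝ) (ha : 0 < a) (hb : 0 < b) (k : ℤ) (hk : 1 ≤ k) :
    0 < (k : ℝ) * a ∧ ∃ z : ℝ → ℂ × ℂ, Differentiable ℝ z ∧
      (∀ t, Real.pi * ‖(z t).1‖ ^ 2 / a +
        Real.pi * ‖(z t).2‖ ^ 2 / b = 1) ∧
      (∀ t, deriv z t = reebEllipsoid a b (z t)) ∧
      (∃ t s : ℝ, z t ≠ z s) ∧ z ((k : ℝ) * a) = z 0 := by
  have hπ := Real.pi_pos
  have ha' : (a : ℂ) ≠ 0 := by exact_mod_cast ha.ne'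
  set c : ℂ := (Real.sqrt (a / Real.pi) : ℂ) with hc
  set d : ℂ := 2 * (Real.pi : ℂ) * Complex.I / a with hd
  set z : ℝ → ℂ × ℂ := fun t => (c * Complex.exp (d * t), 0) with hz
  have hc0 : c ≠ 0 := by
    simp only [hc, ne_eq, Complex.ofReal_eq_zero]
    positivity
  have hder : ∀ t : ℝ, HasDerivAt z (c * (Complex.exp (d * t) * d), 0) t := by
    intro t
    have h1 : HasDerivAt (fun s : ℝ => (s : ℂ)) 1 t := by
      exact Complex.ofRealCLM.hasDerivAt (x := t)
    have h2 : HasDerivAt (fun s : ℝ => d * (s : ℂ)) d t := by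
      simpa using h1.const_mul d
    exact ((h2.cexp.const_mul c)).prodMk (hasDerivAt_const t (0 : ℂ))
  constructor
  · have : (1 : ℝ) ≤ (k : ℝ) := by exact_mod_cast hk
    nlinarith
  refine ⟨z, fun t => (hder t).differentiableAt, ?_, ?_, ?_, ?_⟩
  · intro t
    have habs : ‖(Complex.exp (d * t))‖ = 1 := by
      have : d * t = ((2 * Real.pi * t / a : ℝ) : ℂ) * Complex.I := by
        rw [hd]; push_cast; field_simp
      rw [this, Complex.norm_exp_ofReal_mul_I]
    simp only [hz, norm_mul, habs, mul_one, norm_zero]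
    rw [hc, Complex.norm_real, Real.norm_eq_abs, _root_.abs_of_nonneg (Real.sqrt_nonneg _),
      Real.sq_sqrt (by positivity : (0:ℝ) ≤ a / Real.pi)]
    field_simp
    simp
  · intro t
    rw [(hder t).deriv]
    simp only [reebEllipsoid, hz]
    refine Prod.ext ?_ ?_ <;> simp [hd] <;> ring
  · refine ⟨a / 2, 0, ?_⟩
    simp only [hz, Prod.mk.injEq, ne_eq, not_and]
    intro h _
    have he : d * ((a / 2 : ℝ) : ℂ) = (Real.pi : ℂ) * Complex.I := by
      rw [hd]; push_cast; field_simp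
    rw [he, Complex.exp_pi_mul_I] at h
    simp only [Complex.ofReal_zero, mul_zero, Complex.exp_zero, mul_one] at h
    rw [mul_neg_one] at h
    exact hc0 (by linear_combination -h/2)
  · have : Complex.exp (d * ((k : ℝ) * a : ℝ)) = 1 := by
      rw [Complex.exp_eq_one_iff]
      exact ⟨k, by rw [hd]; push_cast; field_simp⟩
    simp only [hz, this, Complex.ofReal_zero, mul_zero, Complex.exp_zero]

/-- Existence of a periodic Reeb orbit in the second coordinate. -/
lemma orbit_second_aux (a b : ℝ) (ha : 0 < a) (hb : 0 < b) (k : ℤ) (hk : 1 ≤ k) :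
    0 < (k : ℝ) * b ∧ ∃ z : ℝ → ℂ × ℂ, Differentiable ℝ z ∧
      (∀ t, Real.pi * ‖(z t).1‖ ^ 2 / a +
        Real.pi * ‖(z t).2‖ ^ 2 / b = 1) ∧
      (∀ t, deriv z t = reebEllipsoid a b (z t)) ∧
      (∃ t s : ℝ, z t ≠ z s) ∧ z ((k : ℝ) * b) = z 0 := by
  have hπ := Real.pi_pos
  have hb' : (b : ℂ) ≠ 0 := by exact_mod_cast hb.ne'
  set c : ℂ := (Real.sqrt (b / Real.pi) : ℂ) with hc
  set d : ℂ := 2 * (Real.pi : ℂ) * Complex.I / b with hd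
  set z : ℝ → ℂ × ℂ := fun t => (0, c * Complex.exp (d * t)) with hz
  have hc0 : c ≠ 0 := by
    simp only [hc, ne_eq, Complex.ofReal_eq_zero]
    positivity
  have hder : ∀ t : ℝ, HasDerivAt z (0, c * (Complex.exp (d * t) * d)) t := by
    intro t
    have h1 : HasDerivAt (fun s : ℝ => (s : ℂ)) 1 t := by
      exact Complex.ofRealCLM.hasDerivAt (x := t)
    have h2 : HasDerivAt (fun s : ℝ => d * (s : ℂ)) d t := by
      simpa using h1.const_mul d
    exact (hasDerivAt_const t (0 : ℂ)).prodMk (h2.cexp.const_mul c)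
  constructor
  · have : (1 : ℝ) ≤ (k : ℝ) := by exact_mod_cast hk
    nlinarith
  refine ⟨z, fun t => (hder t).differentiableAt, ?_, ?_, ?_, ?_⟩
  · intro t
    have habs : ‖(Complex.exp (d * t))‖ = 1 := by
      have : d * t = ((2 * Real.pi * t / b : ℝ) : ℂ) * Complex.I := by
        rw [hd]; push_cast; field_simp
      rw [this, Complex.norm_exp_ofReal_mul_I]
    simp only [hz, norm_mul, habs, mul_one, norm_zero]
    rw [hc, Complex.norm_real, Real.norm_eq_abs, _root_.abs_of_nonneg (Real.sqrt_nonneg _),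
      Real.sq_sqrt (by positivity : (0:ℝ) ≤ b / Real.pi)]
    field_simp
    simp
  · intro t
    rw [(hder t).deriv]
    simp only [reebEllipsoid, hz]
    refine Prod.ext ?_ ?_ <;> simp [hd] <;> ring
  · refine ⟨b / 2, 0, ?_⟩
    simp only [hz, Prod.mk.injEq, ne_eq, not_and]
    intro _ h
    have he : d * ((b / 2 : ℝ) : ℂ) = (Real.pi : ℂ) * Complex.I := by
      rw [hd]; push_cast; field_simp
    rw [he, Complex.exp_pi_mul_I] at h
    simp only [Complex.ofReal_zero, mul_zero, Complex.exp_zero, mul_one] at h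
    rw [mul_neg_one] at h
    exact hc0 (by linear_combination -h/2)
  · have : Complex.exp (d * ((k : ℝ) * b : ℝ)) = 1 := by
      rw [Complex.exp_eq_one_iff]
      exact ⟨k, by rw [hd]; push_cast; field_simp⟩
    simp only [hz, this, Complex.ofReal_zero, mul_zero, Complex.exp_zero]

/-- The action spectrum of the ellipsoid `E(a,b)`: the set of periods of nonconstant
periodic Reeb trajectories on `∂E(a,b)` is exactly
`{k·a : k ≥ 1} ∪ {k·b : k ≥ 1}`. -/
theorem ellipsoid_action_spectrum (a b : ℝ) (ha : 0 < a) (hb : 0 < b) :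
    {T : ℝ | 0 < T ∧ ∃ z : ℝ → ℂ × ℂ, Differentiable ℝ z ∧
      (∀ t, Real.pi * ‖(z t).1‖ ^ 2 / a +
        Real.pi * ‖(z t).2‖ ^ 2 / b = 1) ∧
      (∀ t, deriv z t = reebEllipsoid a b (z t)) ∧
      (∃ t s : ℝ, z t ≠ z s) ∧ z T = z 0} =
    {T : ℝ | ∃ k : ℤ, 1 ≤ k ∧ T = (k : ℝ) * a} ∪
      {T : ℝ | ∃ k : ℤ, 1 ≤ k ∧ T = (k : ℝ) * b} := by
  have hπ := Real.pi_pos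
  have ha' : (a : ℂ) ≠ 0 := by exact_mod_cast ha.ne'
  have hb' : (b : ℂ) ≠ 0 := by exact_mod_cast hb.ne'
  have h2πI : (2 : ℂ) * Real.pi * Complex.I ≠ 0 := by
    simp [Real.pi_ne_zero, Complex.I_ne_zero]
  ext T
  simp only [Set.mem_setOf_eq, Set.mem_union]
  constructor
  · rintro ⟨hT, z, hz, hcon, hode, -, hper⟩
    -- solve the ODE componentwise
    have hode1 : ∀ t, deriv (fun s => (z s).1) t = (2 * Real.pi * Complex.I / a) * (z t).1 := by
      intro t
      have h := ((hz t).hasFDerivAt.fst).hasDerivAt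
      rw [h.deriv]
      simp only [ContinuousLinearMap.coe_comp', Function.comp_apply, fderiv_apply_one_eq_deriv,
        ContinuousLinearMap.coe_fst', hode t, reebEllipsoid]
      ring
    have hode2 : ∀ t, deriv (fun s => (z s).2) t = (2 * Real.pi * Complex.I / b) * (z t).2 := by
      intro t
      have h := ((hz t).hasFDerivAt.snd).hasDerivAt
      rw [h.deriv]
      simp only [ContinuousLinearMap.coe_comp', Function.comp_apply, fderiv_apply_one_eq_deriv,
        ContinuousLinearMap.coe_snd', hode t, reebEllipsoid]
      ring
    have f1 := ode_sol_aux _ _ hz.fst hode1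
    have f2 := ode_sol_aux _ _ hz.snd hode2
    have hne : (z 0).1 ≠ 0 ∨ (z 0).2 ≠ 0 := by
      by_contra h
      push_neg at h
      have h0 := hcon 0
      rw [h.1, h.2] at h0
      simp at h0
    rcases hne with hne | hne
    · left
      have heq : (z 0).1 * Complex.exp (2 * Real.pi * Complex.I / a * T) = (z 0).1 := by
        rw [← f1 T]
        exact congrArg Prod.fst hper
      have hexp : Complex.exp (2 * Real.pi * Complex.I / a * T) = 1 := by
        exact mul_left_cancel₀ hne (heq.trans (mul_one _).symm)
      rw [Complex.exp_eq_one_iff] at hexp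
      obtain ⟨n, hn⟩ := hexp
      have hTa : (T : ℂ) = n * a := by
        field_simp at hn
        exact mul_left_cancel₀ h2πI (by linear_combination (2 * Real.pi * Complex.I) * hn)
      have hTr : T = (n : ℝ) * a := by exact_mod_cast hTa
      refine ⟨n, ?_, hTr⟩
      have hpos : 0 < (n : ℝ) * a := hTr ▸ hT
      have : 0 < (n : ℝ) := by
        rcases mul_pos_iff.mp hpos with ⟨h, _⟩ | ⟨_, h⟩
        · exact h
        · linarith
      have : 0 < n := by exact_mod_cast this
      omega
    · right
      have heq : (z 0).2 * Complex.exp (2 * Real.pi * Complex.I / b * T) = (z 0).2 := by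
        rw [← f2 T]
        exact congrArg Prod.snd hper
      have hexp : Complex.exp (2 * Real.pi * Complex.I / b * T) = 1 := by
        exact mul_left_cancel₀ hne (heq.trans (mul_one _).symm)
      rw [Complex.exp_eq_one_iff] at hexp
      obtain ⟨n, hn⟩ := hexp
      have hTb : (T : ℂ) = n * b := by
        field_simp at hn
        exact mul_left_cancel₀ h2πI (by linear_combination (2 * Real.pi * Complex.I) * hn)
      have hTr : T = (n : ℝ) * b := by exact_mod_cast hTb
      refine ⟨n, ?_, hTr⟩
      have hpos : 0 < (n : ℝ) * b := hTr ▸ hT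
      have : 0 < (n : ℝ) := by
        rcases mul_pos_iff.mp hpos with ⟨h, _⟩ | ⟨_, h⟩
        · exact h
        · linarith
      have : 0 < n := by exact_mod_cast this
      omega
  · rintro (⟨k, hk, rfl⟩ | ⟨k, hk, rfl⟩)
    · exact orbit_first_aux a b ha hb k hk
    · exact orbit_second_aux a b ha hb k hk
end
end
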